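/- Let h > 0 and for k ∈ ℤ set x_k = k·h and S_k(x, h) = sin((π/h)(x − x_k)) / ((π/h)(x − x_k)) for x ≠ x_k, S_k(x_k, h) = 1. Then the second derivative of S_k(·, h) at the node x_j equals −π²/(3h²) when j = k and equals −2·(−1)^{j−k} / (h²·(j − k)²) when j ≠ k. Consequently the second sinc differentiation matrix, with (j, k) entry S_k''(x_j), is symmetric: S_k''(x_j) = S_j''(x_k) for all j, k. -/

import Mathlib

open Real Filter

noncomputable def sg : ℝ → ℝ := fun x => if x = 0 then 1 else Real.sin x / x

noncomputable def sg1 : ℝ → ℝ := fun x =>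
  if x = 0 then 0 else (x * Real.cos x - Real.sin x) / x ^ 2

lemma hasDerivAt_sg_ne {x : ℝ} (hx : x ≠ 0) :
    HasDerivAt sg ((x * Real.cos x - Real.sin x) / x ^ 2) x := by
  have h1 : HasDerivAt (fun y => Real.sin y / y)
      ((Real.cos x * x - Real.sin x * 1) / x ^ 2) x :=
    (Real.hasDerivAt_sin x).div (hasDerivAt_id x) hx
  have h2 : sg =ᶠ[nhds x] fun y => Real.sin y / y := by
    filter_upwards [isOpen_ne.mem_nhds hx] with y hy
    simp [sg, hy]
  have h1' : HasDerivAt (fun y => Real.sin y / y)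
      ((x * Real.cos x - Real.sin x) / x ^ 2) x := by
    convert h1 using 1; ring
  exact h1'.congr_of_eventuallyEq h2

lemma eventually_abs_le_one : ∀ᶠ x : ℝ in nhds 0, |x| ≤ 1 := by
  filter_upwards [Metric.ball_mem_nhds (0 : ℝ) one_pos] with x hx
  rw [Metric.mem_ball, Real.dist_eq, sub_zero] at hx
  exact hx.le

lemma hasDerivAt_sg_zero : HasDerivAt sg 0 0 := by
  rw [hasDerivAt_iff_tendsto_slope]
  apply squeeze_zero_norm' (a := fun x : ℝ => |x|)
  · filter_upwards [self_mem_nhdsWithin,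
      eventually_nhdsWithin_of_eventually_nhds eventually_abs_le_one] with x hx h1
    have hx0 : x ≠ 0 := hx
    have hb := Real.sin_bound h1
    have hs : slope sg 0 x = (Real.sin x - x) / x ^ 2 := by
      have e1 : sg x = Real.sin x / x := if_neg hx0
      have e0 : sg 0 = 1 := if_pos rfl
      rw [slope_def_field, e1, e0, sub_zero, div_sub' hx0, mul_one, div_div, sq]
    rw [hs, Real.norm_eq_abs, abs_div]
    rw [div_le_iff₀ (by positivity)]
    have h2 : |Real.sin x - x| ≤ |x| ^ 3 / 6 + |x| ^ 4 * (5 / 96) := by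
      have he : Real.sin x - x = (Real.sin x - (x - x ^ 3 / 6)) + (-(x ^ 3 / 6)) := by ring
      rw [he]
      refine (abs_add_le _ _).trans ?_
      have h3 : |-(x ^ 3 / 6)| = |x| ^ 3 / 6 := by
        rw [abs_neg, abs_div, abs_pow]; norm_num
      have h54 : |x| ^ 5 ≤ |x| ^ 4 := pow_le_pow_of_le_one (abs_nonneg x) h1 (by norm_num)
      rw [h3]; nlinarith [pow_nonneg (abs_nonneg x) 4]
    refine h2.trans ?_
    have hx2 : |x ^ 2| = |x| ^ 2 := abs_pow x 2
    have h43 : |x| ^ 4 ≤ |x| ^ 3 := pow_le_pow_of_le_one (abs_nonneg x) h1 (by norm_num)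
    have h3 : |x| * |x| ^ 2 = |x| ^ 3 := by ring
    rw [hx2, h3]
    nlinarith [pow_nonneg (abs_nonneg x) 3]
  · have : Tendsto (fun x : ℝ => |x|) (nhds 0) (nhds 0) := by
      simpa using continuous_abs.tendsto (0 : ℝ)
    exact this.mono_left nhdsWithin_le_nhds

lemma hasDerivAt_sg : ∀ x : ℝ, HasDerivAt sg (sg1 x) x := by
  intro x
  by_cases hx : x = 0
  · subst hx; simpa [sg1] using hasDerivAt_sg_zero
  · simpa [sg1, hx] using hasDerivAt_sg_ne hx

lemma deriv_sg : deriv sg = sg1 := funext fun x => (hasDerivAt_sg x).deriv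

lemma hasDerivAt_sg1_ne {x : ℝ} (hx : x ≠ 0) :
    HasDerivAt sg1
      ((-(x * Real.sin x) * x ^ 2 - (x * Real.cos x - Real.sin x) * (2 * x)) / (x ^ 2) ^ 2) x := by
  have hN : HasDerivAt (fun y => y * Real.cos y - Real.sin y) (-(x * Real.sin x)) x := by
    have h := ((hasDerivAt_id x).mul (Real.hasDerivAt_cos x)).sub (Real.hasDerivAt_sin x)
    simp only [id_eq] at h
    exact h.congr_deriv (by ring)
  have hD : HasDerivAt (fun y : ℝ => y ^ 2) (2 * x) x := by
    simpa using hasDerivAt_pow 2 x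
  have h1 := hN.div hD (pow_ne_zero 2 hx)
  have h2 : sg1 =ᶠ[nhds x] fun y => (y * Real.cos y - Real.sin y) / y ^ 2 := by
    filter_upwards [isOpen_ne.mem_nhds hx] with y hy
    simp [sg1, hy]
  exact h1.congr_of_eventuallyEq h2

lemma hasDerivAt_sg1_zero : HasDerivAt sg1 (-(1 / 3)) 0 := by
  rw [hasDerivAt_iff_tendsto_slope]
  have key : Tendsto (fun x : ℝ => slope sg1 0 x + 1 / 3) (nhdsWithin 0 {(0:ℝ)}ᶜ) (nhds 0) := by
    apply squeeze_zero_norm' (a := fun x : ℝ => 10 / 96 * |x|)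
    · filter_upwards [self_mem_nhdsWithin,
        eventually_nhdsWithin_of_eventually_nhds eventually_abs_le_one] with x hx h1
      have hx0 : x ≠ 0 := hx
      have hbs := Real.sin_bound h1
      have hbc := Real.cos_bound h1
      have hs : slope sg1 0 x = (x * Real.cos x - Real.sin x) / x ^ 3 := by
        have e1 : sg1 x = (x * Real.cos x - Real.sin x) / x ^ 2 := if_neg hx0
        have e0 : sg1 0 = 0 := if_pos rfl
        rw [slope_def_field, e1, e0, sub_zero, sub_zero, div_div, ← pow_succ]
      have heq : slope sg1 0 x + 1 / 3 =
          (x * (Real.cos x - (1 - x ^ 2 / 2)) - (Real.sin x - (x - x ^ 3 / 6))) / x ^ 3 := by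
        rw [hs, div_add' _ _ _ (pow_ne_zero 3 hx0)]
        congr 1
        ring
      rw [heq, Real.norm_eq_abs, abs_div]
      rw [div_le_iff₀ (by positivity)]
      have hnum : |x * (Real.cos x - (1 - x ^ 2 / 2)) - (Real.sin x - (x - x ^ 3 / 6))| ≤
          |x| * (|x| ^ 4 * (5 / 96)) + |x| ^ 4 * (5 / 96) := by
        refine (abs_sub _ _).trans (add_le_add ?_ (hbs.trans (by have h54' : |x| ^ 5 ≤ |x| ^ 4 := pow_le_pow_of_le_one (abs_nonneg x) h1 (by norm_num); nlinarith [pow_nonneg (abs_nonneg x) 4])))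
        rw [abs_mul]
        exact mul_le_mul_of_nonneg_left hbc (abs_nonneg x)
      refine hnum.trans ?_
      have hx3 : |x ^ 3| = |x| ^ 3 := abs_pow x 3
      have h43 : |x| ^ 4 ≤ |x| ^ 3 := pow_le_pow_of_le_one (abs_nonneg x) h1 (by norm_num)
      have h5 : |x| * |x| ^ 4 = |x| ^ 5 := by ring
      have h54 : |x| ^ 5 ≤ |x| ^ 4 := pow_le_pow_of_le_one (abs_nonneg x) h1 (by norm_num)
      have h44 : |x| * |x| ^ 3 = |x| ^ 4 := by ring
      rw [hx3]
      nlinarith [abs_nonneg x]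
    · have : Tendsto (fun x : ℝ => 10 / 96 * |x|) (nhds 0) (nhds 0) := by
        have h := (continuous_abs.tendsto (0 : ℝ)).const_mul (10 / 96 : ℝ)
        simpa using h
      exact this.mono_left nhdsWithin_le_nhds
  have h2 := key.sub_const (1 / 3)
  simp only [add_sub_cancel_right] at h2
  convert h2 using 2
  norm_num

lemma cos_int_mul_pi' (n : ℤ) : Real.cos ((n : ℝ) * π) = (-1 : ℝ) ^ n := by
  simpa using Real.cos_int_mul_pi_sub 0 n

/-- Entries of the second sinc differentiation matrix: `S_k''(x_j) = −π²/(3h²)` for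
`j = k` and `S_k''(x_j) = −2(−1)^{j−k}/(h²(j−k)²)` for `j ≠ k`; consequently the
matrix is symmetric. -/
theorem sinc_second_derivative_matrix (h : ℝ) (hh : 0 < h)
    (S : ℤ → ℝ → ℝ)
    (hS : S = fun (k : ℤ) (x : ℝ) => if x = (k : ℝ) * h then 1
      else Real.sin (π / h * (x - (k : ℝ) * h)) / (π / h * (x - (k : ℝ) * h))) :
    (∀ j k : ℤ, deriv (deriv (S k)) ((j : ℝ) * h) =
      if j = k then -(π ^ 2) / (3 * h ^ 2)
      else -2 * (-1 : ℝ) ^ (j - k) / (h ^ 2 * ((j : ℝ) - (k : ℝ)) ^ 2)) ∧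
    (∀ j k : ℤ, deriv (deriv (S k)) ((j : ℝ) * h) = deriv (deriv (S j)) ((k : ℝ) * h)) := by
  have hh0 : h ≠ 0 := ne_of_gt hh
  have hc : (π / h) ≠ 0 := div_ne_zero Real.pi_ne_zero hh0
  have hSg : ∀ k : ℤ, S k = fun x => sg (π / h * (x - (k : ℝ) * h)) := by
    intro k; funext x
    rw [hS]
    simp only [sg]
    by_cases hx : x = (k : ℝ) * h
    · simp [hx]
    · have hne : π / h * (x - (k : ℝ) * h) ≠ 0 :=
        mul_ne_zero hc (sub_ne_zero.mpr hx)
      rw [if_neg hx, if_neg hne]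
  have hlin : ∀ (k : ℤ) (x : ℝ),
      HasDerivAt (fun y => π / h * (y - (k : ℝ) * h)) (π / h) x := by
    intro k x
    simpa using ((hasDerivAt_id x).sub_const ((k : ℝ) * h)).const_mul (π / h)
  have hd1 : ∀ k : ℤ, deriv (S k) = fun x => sg1 (π / h * (x - (k : ℝ) * h)) * (π / h) := by
    intro k; funext x
    rw [hSg k]
    exact ((hasDerivAt_sg (π / h * (x - (k : ℝ) * h))).comp x (hlin k x)).deriv
  have main : ∀ j k : ℤ, deriv (deriv (S k)) ((j : ℝ) * h) =
      if j = k then -(π ^ 2) / (3 * h ^ 2)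
      else -2 * (-1 : ℝ) ^ (j - k) / (h ^ 2 * ((j : ℝ) - (k : ℝ)) ^ 2) := by
    intro j k
    rw [hd1 k]
    by_cases hjk : j = k
    · subst hjk
      have harg0 : π / h * ((j : ℝ) * h - (j : ℝ) * h) = 0 := by
        rw [sub_self, mul_zero]
      have hz : HasDerivAt sg1 (-(1 / 3)) (π / h * ((j : ℝ) * h - (j : ℝ) * h)) := by
        rw [harg0]; exact hasDerivAt_sg1_zero
      have hD := (hz.comp ((j : ℝ) * h) (hlin j ((j : ℝ) * h))).mul_const (π / h)
      have hDv : deriv (fun x => sg1 (π / h * (x - (j : ℝ) * h)) * (π / h)) ((j : ℝ) * h)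
          = -(1 / 3) * (π / h) * (π / h) := hD.deriv
      rw [hDv, if_pos rfl]
      field_simp
    · have harg : π / h * ((j : ℝ) * h - (k : ℝ) * h) = ((j - k : ℤ) : ℝ) * π := by
        push_cast
        field_simp
      set m : ℤ := j - k with hmdef
      have hm : m ≠ 0 := sub_ne_zero.mpr hjk
      have hmr : ((m : ℝ)) ≠ 0 := Int.cast_ne_zero.mpr hm
      have hp0 : (m : ℝ) * π ≠ 0 := mul_ne_zero hmr Real.pi_ne_zero
      have hz : HasDerivAt sg1 (-2 * (-1 : ℝ) ^ m / ((m : ℝ) ^ 2 * π ^ 2))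
          (π / h * ((j : ℝ) * h - (k : ℝ) * h)) := by
        rw [harg]
        have h0 := hasDerivAt_sg1_ne hp0
        convert h0 using 1
        rw [Real.sin_int_mul_pi, cos_int_mul_pi']
        field_simp
        ring
      have hD := (hz.comp ((j : ℝ) * h) (hlin k ((j : ℝ) * h))).mul_const (π / h)
      have hDv : deriv (fun x => sg1 (π / h * (x - (k : ℝ) * h)) * (π / h)) ((j : ℝ) * h)
          = -2 * (-1 : ℝ) ^ m / ((m : ℝ) ^ 2 * π ^ 2) * (π / h) * (π / h) := hD.deriv
      rw [hDv, if_neg hjk]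
      have hcast : ((m : ℝ)) = (j : ℝ) - (k : ℝ) := by rw [hmdef]; push_cast; ring
      rw [← hcast]
      field_simp
  refine ⟨main, fun j k => ?_⟩
  rw [main j k, main k j]
  by_cases hjk : j = k
  · subst hjk; simp
  · rw [if_neg hjk, if_neg (Ne.symm hjk)]
    have hsq : ((k : ℝ) - (j : ℝ)) ^ 2 = ((j : ℝ) - (k : ℝ)) ^ 2 := by ring
    have hpow : ((-1 : ℝ)) ^ (k - j) = (-1 : ℝ) ^ (j - k) := by
      rw [show k - j = -(j - k) by ring, zpow_neg]
      rcases Int.even_or_odd (j - k) with he | ho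
      · rw [he.neg_one_zpow]; norm_num
      · rw [ho.neg_one_zpow]; norm_num
    rw [hsq, hpow]
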